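/- arXiv:2204.05250 — 2 statements merged into one kernel-verified Lean document; each statement's English description precedes it below -/
import Mathlib

section
/- Let G be a connected graph with at least one cycle and at least one leaf, such that removing a cut-edge uv separates a tree component T_u containing u. If additionally G has girth at least 5 and C_u is an identifying code of G − T_u containing v, then C_u ∪ {u'} is an identifying code of G in the case where T_u is a path on two vertices u, u' with u' a leaf. -/
open SimpleGraph

/-- The closed neighbourhood of a vertex. -/
def closedNbr {V : Type*} (G : SimpleGraph V) (v : V) : Set V := insert v (G.neighborSet v)

/-- `C` is an identifying code of `G`. -/
def IsIdCode {V : Type*} (G : SimpleGraph V) (C : Set V) : Prop :=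
  (∀ v : V, (closedNbr G v ∩ C).Nonempty) ∧
  ∀ u v : V, closedNbr G u ∩ C = closedNbr G v ∩ C → u = v

/-- A vertex of degree 1. -/
def IsLeaf {V : Type*} (G : SimpleGraph V) (v : V) : Prop := (G.neighborSet v).ncard = 1

/-- The set of leaves of `G`. -/
def leaves {V : Type*} (G : SimpleGraph V) : Set V := {v | IsLeaf G v}

/-- The set of support vertices of `G`. -/
def supports {V : Type*} (G : SimpleGraph V) : Set V := {v | ∃ u, IsLeaf G u ∧ G.Adj v u}

/-- `G` is identifiable: distinct vertices have distinct closed neighbourhoods. -/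
def Identifiable {V : Type*} (G : SimpleGraph V) : Prop :=
  ∀ u v : V, closedNbr G u = closedNbr G v → u = v

/-- `G` is twin-free: no two distinct vertices share an open or closed neighbourhood. -/
def TwinFree {V : Type*} (G : SimpleGraph V) : Prop :=
  ∀ u v : V, u ≠ v →
    G.neighborSet u ≠ G.neighborSet v ∧ closedNbr G u ≠ closedNbr G v

theorem stmt_16 {V : Type*} [Fintype V] (G : SimpleGraph V)
    (hconn : G.Connected) (hid : Identifiable G) (hgirth : 5 ≤ G.egirth)
    (hcyc : ¬ G.IsAcyclic)
    (u u' v : V) (hleafu' : G.neighborSet u' = {u})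
    (hu : G.neighborSet u = {u', v})
    (Cu : Set ({u, u'}ᶜ : Set V))
    (hCu : IsIdCode (G.induce ({u, u'}ᶜ : Set V)) Cu)
    (hvmem : ∀ hv : v ∈ ({u, u'}ᶜ : Set V), (⟨v, hv⟩ : ({u, u'}ᶜ : Set V)) ∈ Cu) :
    IsIdCode G ((Subtype.val '' Cu) ∪ {u'}) := by
  classical
  have hadj_uu' : G.Adj u u' := by
    have h : u' ∈ G.neighborSet u := by rw [hu]; exact Or.inl rfl
    exact h
  have hadj_uv : G.Adj u v := by
    have h : v ∈ G.neighborSet u := by rw [hu]; exact Or.inr rfl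
    exact h
  have hne_uu' : u ≠ u' := hadj_uu'.ne
  have hvu : v ≠ u := fun h => G.irrefl (h ▸ hadj_uv)
  have hvu' : v ≠ u' := by
    intro h
    have hclosed : ∀ x y : V, x ∈ ({u, u'} : Set V) → G.Adj x y → y ∈ ({u, u'} : Set V) := by
      intro x y hx hxy
      rcases hx with hx | hx
      · subst hx
        have hy : y ∈ G.neighborSet x := hxy
        rw [hu] at hy
        rcases hy with hy | hy
        · exact Or.inr hy
        · exact Or.inr (h ▸ hy)
      · have hx' : x = u' := hx
        subst hx'
        have hy : y ∈ G.neighborSet x := hxy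
        rw [hleafu'] at hy
        exact Or.inl hy
    have hwalk : ∀ {a b : V} (p : G.Walk a b), a ∈ ({u, u'} : Set V) →
        ∀ x ∈ p.support, x ∈ ({u, u'} : Set V) := by
      intro a b p
      induction p with
      | nil =>
        intro ha x hx
        simp only [SimpleGraph.Walk.support_nil, List.mem_singleton] at hx
        exact hx ▸ ha
      | cons hadj q ih =>
        intro ha x hx
        rw [SimpleGraph.Walk.support_cons] at hx
        rcases List.mem_cons.mp hx with rfl | hx
        · exact ha
        · exact ih (hclosed _ _ ha hadj) x hx
    unfold SimpleGraph.IsAcyclic at hcyc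
    push_neg at hcyc
    obtain ⟨a, c, hc⟩ := hcyc
    have ha : a ∈ ({u, u'} : Set V) := by
      obtain ⟨p⟩ := hconn.preconnected u a
      exact hwalk p (Or.inl rfl) a p.end_mem_support
    have hsub : ∀ x ∈ c.support.tail, x ∈ ({u, u'} : Set V) := by
      intro x hx
      exact hwalk c ha x (List.mem_of_mem_tail hx)
    have hnd : c.support.tail.Nodup := hc.support_nodup
    have hlen : 3 ≤ c.support.tail.length := by
      have h1 : c.support.length = c.length + 1 := c.length_support
      have h2 := hc.three_le_length
      rw [List.length_tail, h1]
      omega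
    have hcard : c.support.tail.toFinset.card = c.support.tail.length :=
      List.toFinset_card_of_nodup hnd
    have hsub' : c.support.tail.toFinset ⊆ ({u, u'} : Finset V) := by
      intro x hx
      have hx' := hsub x (List.mem_toFinset.mp hx)
      rcases hx' with h1 | h1
      · simp [h1]
      · have : x = u' := h1
        simp [this]
    have h2 : ({u, u'} : Finset V).card ≤ 2 := by
      apply le_trans (Finset.card_insert_le _ _)
      simp
    have := Finset.card_le_card hsub'
    omega
  have hvS : v ∈ ({u, u'}ᶜ : Set V) := by
    intro h
    rcases h with h | h
    · exact hvu h
    · exact hvu' h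
  have hu'not : ∀ w ∈ ({u, u'}ᶜ : Set V), u' ∉ closedNbr G w := by
    intro w hw hmem
    rcases hmem with h | h
    · exact hw (Or.inr h.symm)
    · have h' : w ∈ G.neighborSet u' := G.adj_symm h
      rw [hleafu'] at h'
      exact hw (Or.inl h')
  have key : ∀ (w : V) (hw : w ∈ ({u, u'}ᶜ : Set V)),
      closedNbr G w ∩ ((Subtype.val '' Cu) ∪ {u'}) =
        Subtype.val '' (closedNbr (G.induce ({u, u'}ᶜ : Set V)) ⟨w, hw⟩ ∩ Cu) := by
    intro w hw
    ext y
    simp only [closedNbr, Set.mem_inter_iff, Set.mem_insert_iff, mem_neighborSet,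
      Set.mem_union, Set.mem_singleton_iff, Set.mem_image, comap_adj,
      Function.Embedding.coe_subtype]
    constructor
    · rintro ⟨hy1, hy2 | rfl⟩
      · obtain ⟨z, hz, rfl⟩ := hy2
        refine ⟨z, ⟨?_, hz⟩, rfl⟩
        rcases hy1 with h1 | h1
        · exact Or.inl (Subtype.ext h1)
        · exact Or.inr h1
      · exfalso
        apply hu'not w hw
        rcases hy1 with h1 | h1
        · exact Or.inl h1
        · exact Or.inr h1
    · rintro ⟨z, ⟨hz1, hz2⟩, rfl⟩
      refine ⟨?_, Or.inl ⟨z, hz2, rfl⟩⟩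
      rcases hz1 with h1 | h1
      · exact Or.inl (congrArg Subtype.val h1)
      · exact Or.inr h1
  have hu'C : u' ∈ (Subtype.val '' Cu) ∪ {u'} := Or.inr rfl
  have hvC : v ∈ (Subtype.val '' Cu) ∪ {u'} := Or.inl ⟨⟨v, hvS⟩, hvmem hvS, rfl⟩
  have htrace_u' : closedNbr G u' ∩ ((Subtype.val '' Cu) ∪ {u'}) = {u'} := by
    ext y
    constructor
    · rintro ⟨hy1, hy2⟩
      rcases hy2 with ⟨z, hz, rfl⟩ | h
      · exfalso
        rcases hy1 with h1 | h1
        · exact z.2 (Or.inr h1)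
        · have h' : (z : V) ∈ G.neighborSet u' := h1
          rw [hleafu'] at h'
          exact z.2 (Or.inl h')
      · exact h
    · rintro rfl
      exact ⟨Or.inl rfl, hu'C⟩
  have hu'in_u : u' ∈ closedNbr G u ∩ ((Subtype.val '' Cu) ∪ {u'}) :=
    ⟨Or.inr hadj_uu', hu'C⟩
  have hu'in_u' : u' ∈ closedNbr G u' ∩ ((Subtype.val '' Cu) ∪ {u'}) :=
    ⟨Or.inl rfl, hu'C⟩
  have hvin_u : v ∈ closedNbr G u ∩ ((Subtype.val '' Cu) ∪ {u'}) :=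
    ⟨Or.inr hadj_uv, hvC⟩
  have hu'notin : ∀ w ∈ ({u, u'}ᶜ : Set V),
      u' ∉ closedNbr G w ∩ ((Subtype.val '' Cu) ∪ {u'}) := by
    intro w hw hmem
    exact hu'not w hw hmem.1
  have htri : ∀ w : V, w ∈ ({u, u'}ᶜ : Set V) ∨ w = u ∨ w = u' := by
    intro w
    by_cases hw : w ∈ ({u, u'}ᶜ : Set V)
    · exact Or.inl hw
    · right
      by_contra hcon
      push_neg at hcon
      refine hw ?_
      by_contra hw2
      rcases not_not.mp (fun h => hw2 h) with h | h
      · exact hcon.1 h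
      · exact hcon.2 h
  constructor
  · intro w
    rcases htri w with hw | hw | hw
    · rw [key w hw]
      exact (hCu.1 ⟨w, hw⟩).image _
    · exact ⟨v, by rw [hw]; exact Or.inr hadj_uv, hvC⟩
    · exact ⟨u', by rw [hw]; exact Or.inl rfl, hu'C⟩
  · intro a b hab
    rcases htri a with ha | ha | ha <;> rcases htri b with hb | hb | hb
    · rw [key a ha, key b hb] at hab
      have heq := Set.image_injective.mpr Subtype.val_injective hab
      exact congrArg Subtype.val (hCu.2 _ _ heq)
    · exact absurd (by rw [hab, hb]; exact hu'in_u) (hu'notin a ha)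
    · exact absurd (by rw [hab, hb]; exact hu'in_u') (hu'notin a ha)
    · exact absurd (by rw [← hab, ha]; exact hu'in_u) (hu'notin b hb)
    · exact ha.trans hb.symm
    · exfalso
      rw [ha, hb, htrace_u'] at hab
      have hm : v ∈ ({u'} : Set V) := hab ▸ hvin_u
      exact hvu' hm
    · exact absurd (by rw [← hab, ha]; exact hu'in_u') (hu'notin b hb)
    · exfalso
      rw [ha, hb, htrace_u'] at hab
      have hm : v ∈ ({u'} : Set V) := hab.symm ▸ hvin_u
      exact hvu' hm
    · exact ha.trans hb.symm
end

section
/- For a complete bipartite graph K_{k₁,k₂} with k₁ > k₂ ≥ 2, of order n = k₁ + k₂, the minimum size of an identifying code equals n − 2. -/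
open SimpleGraph

theorem stmt_19 (k1 k2 : ℕ) (h1 : k1 > k2) (h2 : 2 ≤ k2) :
    IsLeast {m : ℕ | ∃ C : Set (Fin k1 ⊕ Fin k2),
        IsIdCode (completeBipartiteGraph (Fin k1) (Fin k2)) C ∧ C.ncard = m}
      (k1 + k2 - 2) := by
  have hk1 : 3 ≤ k1 := by omega
  set G := completeBipartiteGraph (Fin k1) (Fin k2) with hGdef
  have cnl : ∀ x : Fin k1, closedNbr G (Sum.inl x)
      = insert (Sum.inl x) (Set.range Sum.inr) := by
    intro x; ext b; cases b <;> simp [closedNbr, neighborSet, hGdef]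
  have cnr : ∀ y : Fin k2, closedNbr G (Sum.inr y)
      = insert (Sum.inr y) (Set.range Sum.inl) := by
    intro y; ext b; cases b <;> simp [closedNbr, neighborSet, hGdef]
  have hcard : Nat.card (Fin k1 ⊕ Fin k2) = k1 + k2 := by simp
  constructor
  · -- membership: the complement of one vertex on each side is an id code
    set u0 : Fin k1 := ⟨0, by omega⟩ with hu0
    set v0 : Fin k2 := ⟨0, by omega⟩ with hv0
    set C : Set (Fin k1 ⊕ Fin k2) := {Sum.inl u0, Sum.inr v0}ᶜ with hC
    refine ⟨C, ⟨?_, ?_⟩, ?_⟩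
    · -- nonemptiness
      rintro (x | y)
      · refine ⟨Sum.inr ⟨1, by omega⟩, ?_, ?_⟩
        · rw [cnl]; right; exact ⟨_, rfl⟩
        · simp [hC, hv0, Fin.ext_iff]
      · refine ⟨Sum.inl ⟨1, by omega⟩, ?_, ?_⟩
        · rw [cnr]; right; exact ⟨_, rfl⟩
        · simp [hC, hu0, Fin.ext_iff]
    · -- injectivity
      have leftmem : ∀ x : Fin k1, x ≠ u0 → Sum.inl x ∈ C := by
        intro x hx; simp [hC, hx]
      have rightmem : ∀ y : Fin k2, y ≠ v0 → Sum.inr y ∈ C := by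
        intro y hy; simp [hC, hy]
      have cross : ∀ (x : Fin k1) (y : Fin k2),
          closedNbr G (Sum.inl x) ∩ C ≠ closedNbr G (Sum.inr y) ∩ C := by
        intro x y h
        -- pick a left vertex distinct from u0 and x
        obtain ⟨u', hu'0, hu'x⟩ : ∃ u' : Fin k1, u' ≠ u0 ∧ u' ≠ x := by
          rcases eq_or_ne x ⟨1, by omega⟩ with rfl | hx
          · exact ⟨⟨2, by omega⟩, by simp [hu0, Fin.ext_iff], by simp [Fin.ext_iff]⟩
          · exact ⟨⟨1, by omega⟩, by simp [hu0, Fin.ext_iff], fun h => hx h.symm⟩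
        have hmem : Sum.inl u' ∈ closedNbr G (Sum.inr y) ∩ C :=
          ⟨by rw [cnr]; right; exact ⟨_, rfl⟩, leftmem _ hu'0⟩
        rw [← h, cnl] at hmem
        rcases hmem.1 with h' | ⟨z, hz⟩
        · exact hu'x (Sum.inl.injEq .. ▸ h')
        · exact absurd hz (by simp)
      rintro (x | y) (x' | y') h
      · -- left-left
        rcases eq_or_ne x u0 with rfl | hx
        · rcases eq_or_ne x' u0 with rfl | hx'
          · rfl
          · have hmem : Sum.inl x' ∈ closedNbr G (Sum.inl x') ∩ C :=
              ⟨by rw [cnl]; left; rfl, leftmem _ hx'⟩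
            rw [← h, cnl] at hmem
            rcases hmem.1 with h' | ⟨z, hz⟩
            · exact h'.symm
            · exact absurd hz (by simp)
        · have hmem : Sum.inl x ∈ closedNbr G (Sum.inl x) ∩ C :=
            ⟨by rw [cnl]; left; rfl, leftmem _ hx⟩
          rw [h, cnl] at hmem
          rcases hmem.1 with h' | ⟨z, hz⟩
          · exact h'
          · exact absurd hz (by simp)
      · exact absurd h (cross x y')
      · exact absurd h.symm (cross x' y)
      · -- right-right
        rcases eq_or_ne y v0 with rfl | hy
        · rcases eq_or_ne y' v0 with rfl | hy'
          · rfl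
          · have hmem : Sum.inr y' ∈ closedNbr G (Sum.inr y') ∩ C :=
              ⟨by rw [cnr]; left; rfl, rightmem _ hy'⟩
            rw [← h, cnr] at hmem
            rcases hmem.1 with h' | ⟨z, hz⟩
            · exact h'.symm
            · exact absurd hz (by simp)
        · have hmem : Sum.inr y ∈ closedNbr G (Sum.inr y) ∩ C :=
            ⟨by rw [cnr]; left; rfl, rightmem _ hy⟩
          rw [h, cnr] at hmem
          rcases hmem.1 with h' | ⟨z, hz⟩
          · exact h'
          · exact absurd hz (by simp)
    · -- cardinality
      have hCc : Cᶜ.ncard = 2 := by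
        rw [hC, compl_compl]
        rw [Set.ncard_pair (by simp)]
      have := Set.ncard_add_ncard_compl C
      rw [hcard, hCc] at this
      omega
  · -- lower bound
    rintro m ⟨C, ⟨hne, hinj⟩, rfl⟩
    have keyL : ∀ x : Fin k1, Sum.inl x ∉ C →
        closedNbr G (Sum.inl x) ∩ C = Set.range Sum.inr ∩ C := by
      intro x hx; rw [cnl, Set.insert_inter_of_notMem hx]
    have keyR : ∀ y : Fin k2, Sum.inr y ∉ C →
        closedNbr G (Sum.inr y) ∩ C = Set.range Sum.inl ∩ C := by
      intro y hy; rw [cnr, Set.insert_inter_of_notMem hy]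
    have hL : (Cᶜ ∩ Set.range Sum.inl).ncard ≤ 1 := by
      rw [Set.ncard_le_one_iff]
      rintro a b ⟨ha, x, rfl⟩ ⟨hb, x', rfl⟩
      exact congrArg Sum.inl (Sum.inl.inj (hinj _ _ ((keyL x ha).trans (keyL x' hb).symm)))
    have hR : (Cᶜ ∩ Set.range Sum.inr).ncard ≤ 1 := by
      rw [Set.ncard_le_one_iff]
      rintro a b ⟨ha, y, rfl⟩ ⟨hb, y', rfl⟩
      exact congrArg Sum.inr (Sum.inr.inj (hinj _ _ ((keyR y ha).trans (keyR y' hb).symm)))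
    have hsplit : Cᶜ = (Cᶜ ∩ Set.range Sum.inl) ∪ (Cᶜ ∩ Set.range Sum.inr) := by
      ext (x | y) <;> simp
    have hCc : Cᶜ.ncard ≤ 2 := by
      rw [hsplit]
      calc ((Cᶜ ∩ Set.range Sum.inl) ∪ (Cᶜ ∩ Set.range Sum.inr)).ncard
          ≤ (Cᶜ ∩ Set.range Sum.inl).ncard + (Cᶜ ∩ Set.range Sum.inr).ncard :=
            Set.ncard_union_le _ _
        _ ≤ 2 := by omega
    have := Set.ncard_add_ncard_compl C
    rw [hcard] at this
    omega
end
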